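/- Let δ be a limit ordinal, e a club of δ, S ⊆ nacc(e) a set of limit ordinals, and for each α ∈ S let D_α be a club of α. Let E = e ∪ ⋃_{α ∈ S} {β ∈ D_α : β ≥ sup(e ∩ α)}. Then acc(E) ⊆ acc(e) ∪ S ∪ ⋃_{α ∈ S} acc(D_α). In particular, if every element of acc(e) ∪ S and every element of acc(D_α) for each α ∈ S has cofinality strictly less than a cardinal λ, then every element of acc(E) has cofinality strictly less than λ. -/

import Mathlib

noncomputable section

/-- The order type of a set of ordinals (meaningful when `C` is small, i.e. bounded). -/
noncomputable def otp (C : Set Ordinal.{0}) : Ordinal.{0} := by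
  classical
  exact if h : Small.{0} C then
    letI := h
    haveI : IsWellOrder (Shrink C)
        (fun x y => ((equivShrink C).symm x : Ordinal) < ((equivShrink C).symm y : Ordinal)) :=
      RelEmbedding.isWellOrder
        (⟨⟨fun x => ((equivShrink C).symm x : Ordinal),
            fun a b hab => (equivShrink C).symm.injective (Subtype.coe_injective hab)⟩,
          Iff.rfl⟩ :
          (fun x y : Shrink C =>
              ((equivShrink C).symm x : Ordinal) < ((equivShrink C).symm y : Ordinal)) ↪r
            ((· < ·) : Ordinal → Ordinal → Prop))
    Ordinal.type
      (fun x y : Shrink C =>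
        ((equivShrink C).symm x : Ordinal) < ((equivShrink C).symm y : Ordinal))
  else 0

/-- `C` is closed in `δ`: any supremum of a nonempty subset of `C` that is `< δ` lies in `C`. -/
def IsClosedIn (C : Set Ordinal.{0}) (δ : Ordinal.{0}) : Prop :=
  ∀ s ⊆ C, s.Nonempty → sSup s < δ → sSup s ∈ C

/-- `C` is a club (closed unbounded) subset of `δ`. -/
def IsClubIn (C : Set Ordinal.{0}) (δ : Ordinal.{0}) : Prop :=
  C ⊆ Set.Iio δ ∧ (∀ β < δ, ∃ γ ∈ C, β ≤ γ) ∧ IsClosedIn C δ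

/-- `S` is stationary in `δ`: it meets every club of `δ`. -/
def IsStationaryIn (S : Set Ordinal.{0}) (δ : Ordinal.{0}) : Prop :=
  ∀ C, IsClubIn C δ → (S ∩ C).Nonempty

/-- The accumulation points of `C` that belong to `C`. -/
def accSet (C : Set Ordinal.{0}) : Set Ordinal.{0} :=
  {β ∈ C | β = sSup (C ∩ Set.Iio β)}

/-- The non-accumulation points of `C`. -/
def naccSet (C : Set Ordinal.{0}) : Set Ordinal.{0} := C \ accSet C

/-- `S_κ^δ`: the set of ordinals below `δ` of cofinality `κ`. -/
def cofSet (κ : Cardinal.{0}) (δ : Ordinal.{0}) : Set Ordinal.{0} :=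
  {α | α < δ ∧ α.cof = κ}

lemma bddAbove_inter_Iio (C : Set Ordinal) (β : Ordinal) : BddAbove (C ∩ Set.Iio β) :=
  ⟨β, fun _ hx => hx.2.le⟩

lemma csSup_inter_Iio_le (C : Set Ordinal) (β : Ordinal) : sSup (C ∩ Set.Iio β) ≤ β := by
  rcases Set.eq_empty_or_nonempty (C ∩ Set.Iio β) with h | h
  · rw [h, csSup_empty]; exact bot_le
  · exact csSup_le h fun x hx => hx.2.le

lemma mem_accSet_of_unbounded {C : Set Ordinal} {β : Ordinal} (hβ : β ∈ C)
    (h : ∀ x < β, ∃ γ ∈ C ∩ Set.Iio β, x < γ) : β ∈ accSet C := by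
  refine ⟨hβ, ?_⟩
  rcases eq_zero_or_pos β with h0 | h0
  · subst h0
    have he : C ∩ Set.Iio (0:Ordinal) = ∅ := by
      ext x; simp [not_lt_zero]
    rw [he, csSup_empty]; exact Ordinal.bot_eq_zero.symm
  · refine le_antisymm ?_ (csSup_inter_Iio_le C β)
    refine le_of_forall_lt fun x hx => ?_
    obtain ⟨γ, hγ, hxγ⟩ := h x hx
    exact lt_of_lt_of_le hxγ (le_csSup (bddAbove_inter_Iio C β) hγ)

lemma accSet_unbounded {C : Set Ordinal} {β : Ordinal} (h : β ∈ accSet C) :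
    ∀ x < β, ∃ γ ∈ C ∩ Set.Iio β, x < γ := by
  intro x hx
  have hne : (C ∩ Set.Iio β).Nonempty := by
    by_contra hc
    rw [Set.not_nonempty_iff_eq_empty] at hc
    have h2 := h.2
    rw [hc, csSup_empty] at h2
    rw [h2] at hx
    exact absurd hx (by simp)
  exact exists_lt_of_lt_csSup hne (h.2 ▸ hx)

/-- Accumulation points of the glued club come from acc(e), S, or the acc(D_α). -/
theorem stmt_11 (δ : Ordinal) (hδ : Order.IsSuccLimit δ)
    (e : Set Ordinal) (he : IsClubIn e δ)
    (S : Set Ordinal) (hSe : S ⊆ naccSet e) (hSlim : ∀ α ∈ S, Order.IsSuccLimit α)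
    (D : Ordinal → Set Ordinal) (hD : ∀ α ∈ S, IsClubIn (D α) α)
    (E : Set Ordinal)
    (hE : E = e ∪ ⋃ α ∈ S, {β ∈ D α | sSup (e ∩ Set.Iio α) ≤ β}) :
    (accSet E ⊆ accSet e ∪ S ∪ ⋃ α ∈ S, accSet (D α)) ∧
      ∀ lam : Cardinal,
        (∀ x ∈ accSet e ∪ S, x.cof < lam) →
        (∀ α ∈ S, ∀ x ∈ accSet (D α), x.cof < lam) →
        ∀ x ∈ accSet E, x.cof < lam := by
  have hmain : accSet E ⊆ accSet e ∪ S ∪ ⋃ α ∈ S, accSet (D α) := by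
    intro β hβacc
    have hunb := accSet_unbounded hβacc
    have hβE := hβacc.1
    rw [hE] at hβE
    by_cases hβe : β ∈ e
    · by_cases hacce : β ∈ accSet e
      · exact Or.inl (Or.inl hacce)
      · have ht : sSup (e ∩ Set.Iio β) < β :=
          lt_of_le_of_ne (csSup_inter_Iio_le e β) (fun h => hacce ⟨hβe, h.symm⟩)
        obtain ⟨γ, ⟨hγE, hγβ⟩, htγ⟩ := hunb _ ht
        rw [hE] at hγE
        rcases hγE with hγe | hγU
        · exact absurd (le_csSup (bddAbove_inter_Iio e β) ⟨hγe, hγβ⟩) (not_le.2 htγ)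
        · simp only [Set.mem_iUnion, Set.mem_setOf_eq] at hγU
          obtain ⟨α', hα'S, hγD, hsγ⟩ := hγU
          have hγα' : γ < α' := (hD α' hα'S).1 hγD
          rcases lt_trichotomy α' β with h1 | h1 | h1
          · have hle : α' ≤ sSup (e ∩ Set.Iio β) :=
              le_csSup (bddAbove_inter_Iio e β) ⟨(hSe hα'S).1, h1⟩
            exact absurd (lt_trans (lt_of_le_of_lt hle htγ) hγα') (lt_irrefl α')
          · exact Or.inl (Or.inr (h1 ▸ hα'S))
          · have hle : β ≤ sSup (e ∩ Set.Iio α') :=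
              le_csSup (bddAbove_inter_Iio e α') ⟨hβe, h1⟩
            exact absurd (lt_of_le_of_lt (hle.trans hsγ) hγβ) (lt_irrefl β)
    · rcases hβE with h | hβU
      · exact absurd h hβe
      simp only [Set.mem_iUnion, Set.mem_setOf_eq] at hβU
      obtain ⟨α, hαS, hβD, hsβ⟩ := hβU
      have hβα : β < α := (hD α hαS).1 hβD
      have hαδ : α < δ := he.1 (hSe hαS).1
      rcases eq_or_lt_of_le hsβ with hs | hs
      · rcases Set.eq_empty_or_nonempty (e ∩ Set.Iio α) with he0 | hene
        · have hβ0 : β = 0 := by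
            rw [← hs, he0, csSup_empty]; exact Ordinal.bot_eq_zero
          refine Or.inr (Set.mem_biUnion hαS ?_)
          refine mem_accSet_of_unbounded hβD fun x hx => ?_
          rw [hβ0] at hx; exact absurd hx (by simp)
        · exfalso
          have hmem : sSup (e ∩ Set.Iio α) ∈ e :=
            he.2.2 _ Set.inter_subset_left hene
              (lt_of_le_of_lt (csSup_inter_Iio_le e α) hαδ)
          rw [hs] at hmem
          exact hβe hmem
      · refine Or.inr (Set.mem_biUnion hαS ?_)
        refine mem_accSet_of_unbounded hβD fun x hx => ?_
        obtain ⟨γ, ⟨hγE, hγβ⟩, hyγ⟩ := hunb (max x (sSup (e ∩ Set.Iio α))) (max_lt hx hs)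
        rw [hE] at hγE
        have hsγ' : sSup (e ∩ Set.Iio α) < γ := lt_of_le_of_lt (le_max_right _ _) hyγ
        have hxγ : x < γ := lt_of_le_of_lt (le_max_left _ _) hyγ
        rcases hγE with hγe | hγU
        · exact absurd (le_csSup (bddAbove_inter_Iio e α) ⟨hγe, lt_trans hγβ hβα⟩)
            (not_le.2 hsγ')
        · simp only [Set.mem_iUnion, Set.mem_setOf_eq] at hγU
          obtain ⟨α', hα'S, hγD, hsγ⟩ := hγU
          have hγα' : γ < α' := (hD α' hα'S).1 hγD
          rcases lt_trichotomy α' α with h1 | h1 | h1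
          · exfalso
            have hle : α' ≤ sSup (e ∩ Set.Iio α) :=
              le_csSup (bddAbove_inter_Iio e α) ⟨(hSe hα'S).1, h1⟩
            exact absurd (lt_trans (lt_of_le_of_lt hle hsγ') hγα') (lt_irrefl α')
          · exact ⟨γ, ⟨h1 ▸ hγD, hγβ⟩, hxγ⟩
          · exfalso
            have hle : α ≤ sSup (e ∩ Set.Iio α') :=
              le_csSup (bddAbove_inter_Iio e α') ⟨(hSe hαS).1, h1⟩
            exact absurd (lt_trans (lt_of_le_of_lt (hle.trans hsγ) hγβ) hβα) (lt_irrefl α)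
  refine ⟨hmain, fun lam h1 h2 x hx => ?_⟩
  rcases hmain hx with (h | h) | h
  · exact h1 x (Or.inl h)
  · exact h1 x (Or.inr h)
  · simp only [Set.mem_iUnion] at h
    obtain ⟨α, hαS, hxD⟩ := h
    exact h2 α hαS x hxD
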